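/- With T = ℂⁿ/Λ, S = F/Λ_S, and m as above, for any 0 < r ≤ √m / 2 the image of the map φ_r : S × B_{F^⊥}(r) → T equals the geodesic tubular neighborhood W_r := {x ∈ T : d_T(x, S) < r}, where d_T(x, S) = min{‖q_{F^⊥}(z)‖ : z ∈ ℂⁿ, p(z) = x} and p : ℂⁿ → T is the quotient map. In particular φ_r is a bijection from S × B_{F^⊥}(r) onto W_r. -/

import Mathlib

/- STATEMENT 5: for 0 < r ≤ √m/2, the image of φ_r : S × B_{F^⊥}(r) → T = ℂⁿ/Λ
equals the geodesic tubular neighborhood W_r = {x ∈ T : d_T(x,S) < r}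
(described via representatives: x ∈ W_r iff some lift z of x has ‖q_{F^⊥}(z)‖ < r);
in particular (together with injectivity) φ_r is a bijection onto W_r. -/
theorem stmt_5 (n : ℕ) (Λ : AddSubgroup (EuclideanSpace ℂ (Fin n)))
    (hdisc : DiscreteTopology Λ)
    (hrank : Submodule.span ℝ (Λ : Set (EuclideanSpace ℂ (Fin n))) = ⊤)
    (F : Submodule ℂ (EuclideanSpace ℂ (Fin n)))
    (hS : Submodule.span ℝ ((Λ : Set (EuclideanSpace ℂ (Fin n))) ∩ (F : Set (EuclideanSpace ℂ (Fin n))))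
        = F.restrictScalars ℝ)
    (m : ℝ)
    (hm : m = sInf {x : ℝ | ∃ l ∈ Λ, l ∉ F ∧
        x = ‖(Submodule.orthogonalProjectionOnto Fᗮ l : EuclideanSpace ℂ (Fin n))‖ ^ 2})
    (r : ℝ) (hr : 0 < r) (hr2 : r ≤ Real.sqrt m / 2) :
    -- the image of φ_r equals W_r:
    {x : EuclideanSpace ℂ (Fin n) ⧸ Λ | ∃ z1 ∈ F, ∃ z2 ∈ Fᗮ, ‖z2‖ < r ∧
        x = QuotientAddGroup.mk (z1 + z2)}
      = {x : EuclideanSpace ℂ (Fin n) ⧸ Λ | ∃ z : EuclideanSpace ℂ (Fin n),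
          ‖(Submodule.orthogonalProjectionOnto Fᗮ z : EuclideanSpace ℂ (Fin n))‖ < r ∧
          x = QuotientAddGroup.mk z}
    -- and φ_r is injective, hence a bijection onto W_r:
    ∧ (∀ z1 ∈ F, ∀ z1' ∈ F, ∀ z2 ∈ Fᗮ, ∀ z2' ∈ Fᗮ, ‖z2‖ < r → ‖z2'‖ < r →
        (QuotientAddGroup.mk (z1 + z2) : EuclideanSpace ℂ (Fin n) ⧸ Λ)
          = QuotientAddGroup.mk (z1' + z2') → (z1 - z1' ∈ Λ ∧ z2 = z2')) := by
  -- key computation: projection of z1 + z2 onto Fᗮ is z2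
  have hproj : ∀ z1 ∈ F, ∀ z2 ∈ Fᗮ,
      (Submodule.orthogonalProjectionOnto Fᗮ (z1 + z2) : EuclideanSpace ℂ (Fin n)) = z2 := by
    intro z1 h1 z2 h2
    rw [map_add, Submodule.coe_add,
      Submodule.orthogonalProjectionOnto_apply_of_mem_orthogonal
        (Submodule.le_orthogonal_orthogonal F h1),
      Submodule.coe_zero, zero_add, ← Submodule.starProjection_apply,
      Submodule.starProjection_eq_self_iff.mpr h2]
  constructor
  · ext x
    simp only [Set.mem_setOf_eq]
    constructor
    · rintro ⟨z1, h1, z2, h2, hn, rfl⟩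
      exact ⟨z1 + z2, by rw [hproj z1 h1 z2 h2]; exact hn, rfl⟩
    · rintro ⟨z, hn, rfl⟩
      refine ⟨Submodule.orthogonalProjectionOnto F z, Submodule.coe_mem _,
        Submodule.orthogonalProjectionOnto Fᗮ z, Submodule.coe_mem _, hn, ?_⟩
      rw [← Submodule.starProjection_apply, ← Submodule.starProjection_apply,
        Submodule.starProjection_add_starProjection_orthogonal (K := F) z]
  · intro z1 h1 z1' h1' z2 h2 z2' h2' hn hn' heq
    rw [QuotientAddGroup.eq] at heq
    set lam : EuclideanSpace ℂ (Fin n) := -(z1 + z2) + (z1' + z2') with hlam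
    have hqlam : (Submodule.orthogonalProjectionOnto Fᗮ lam : EuclideanSpace ℂ (Fin n)) = z2' - z2 := by
      have : lam = (z1' - z1) + (z2' - z2) := by rw [hlam]; abel
      rw [this, hproj (z1' - z1) (sub_mem h1' h1) (z2' - z2) (sub_mem h2' h2)]
    have hm0 : 0 < m := by
      have h2r : 0 < Real.sqrt m := lt_of_lt_of_le hr (by linarith [Real.sqrt_nonneg m])
      exact Real.sqrt_pos.mp h2r
    have hsmall : ‖z2' - z2‖ ^ 2 < m := by
      have h1 : ‖z2' - z2‖ ≤ ‖z2'‖ + ‖z2‖ := norm_sub_le _ _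
      have h2 : ‖z2' - z2‖ < Real.sqrt m := by linarith
      calc ‖z2' - z2‖ ^ 2 < Real.sqrt m ^ 2 := by
            apply pow_lt_pow_left₀ h2 (norm_nonneg _)
            norm_num
        _ = m := Real.sq_sqrt hm0.le
    have hlamF : lam ∈ F := by
      by_contra hnF
      have hmem : ‖(Submodule.orthogonalProjectionOnto Fᗮ lam : EuclideanSpace ℂ (Fin n))‖ ^ 2 ∈
          {x : ℝ | ∃ l ∈ Λ, l ∉ F ∧
            x = ‖(Submodule.orthogonalProjectionOnto Fᗮ l : EuclideanSpace ℂ (Fin n))‖ ^ 2} :=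
        ⟨lam, heq, hnF, rfl⟩
      have hbdd : BddBelow {x : ℝ | ∃ l ∈ Λ, l ∉ F ∧
          x = ‖(Submodule.orthogonalProjectionOnto Fᗮ l : EuclideanSpace ℂ (Fin n))‖ ^ 2} := by
        refine ⟨0, ?_⟩
        rintro x ⟨l, -, -, rfl⟩
        positivity
      have := csInf_le hbdd hmem
      rw [← hm, hqlam] at this
      linarith
    have hz2 : z2 = z2' := by
      have h0 : (Submodule.orthogonalProjectionOnto Fᗮ lam : EuclideanSpace ℂ (Fin n)) = 0 := by
        rw [Submodule.orthogonalProjectionOnto_apply_of_mem_orthogonal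
          (Submodule.le_orthogonal_orthogonal F hlamF), Submodule.coe_zero]
      rw [hqlam] at h0
      have := sub_eq_zero.mp h0
      exact this.symm
    refine ⟨?_, hz2⟩
    have : z1 - z1' = -lam := by rw [hlam, hz2]; abel
    rw [this]
    exact neg_mem heq
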